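/- The space ω₁ of all countable ordinals with the order topology is ultranormal. -/

import Mathlib

/-- A partition of the space `X` into (nonempty, pairwise disjoint) clopen sets. -/
def IsClopenPartition (X : Type*) [TopologicalSpace X] (P : Set (Set X)) : Prop :=
  (∀ S ∈ P, IsClopen S) ∧ (∀ S ∈ P, S.Nonempty) ∧
    (∀ S ∈ P, ∀ T ∈ P, S ≠ T → S ∩ T = ∅) ∧ ⋃₀ P = Set.univ

/-- A space is ultraparacompact if every open cover has a refinement that is a
partition of the space into clopen sets. -/
def Ultraparacompact (X : Type*) [TopologicalSpace X] : Prop :=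
  ∀ 𝒰 : Set (Set X), (∀ U ∈ 𝒰, IsOpen U) → ⋃₀ 𝒰 = Set.univ →
    ∃ P : Set (Set X), IsClopenPartition X P ∧ ∀ S ∈ P, ∃ U ∈ 𝒰, S ⊆ U

/-- A space is ultranormal if any two disjoint closed sets are separated by a clopen set. -/
def Ultranormal (X : Type*) [TopologicalSpace X] : Prop :=
  ∀ R S : Set X, IsClosed R → IsClosed S → Disjoint R S →
    ∃ C : Set X, IsClopen C ∧ R ⊆ C ∧ S ∩ C = ∅

/-- A space is zero-dimensional if the clopen sets form a basis for the topology. -/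
def ZeroDimensional (X : Type*) [TopologicalSpace X] : Prop :=
  TopologicalSpace.IsTopologicalBasis {s : Set X | IsClopen s}

namespace Omega1Aux

open Cardinal Set Order

noncomputable section

abbrev X : Type _ := {α : Ordinal // α < (aleph 1).ord}

instance : TopologicalSpace X := Preorder.topology X

instance : OrderTopology X := ⟨rfl⟩

/-- Successor inside `ω₁`. -/
def sX (a : X) : X := ⟨Order.succ a.1, (Cardinal.isSuccLimit_ord (aleph0_le_aleph 1)).succ_lt a.2⟩

lemma lt_sX (a : X) : a < sX a := by
  rw [← Subtype.coe_lt_coe]; exact Order.lt_succ a.1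

lemma le_iff_lt_sX {x a : X} : x ≤ a ↔ x < sX a := by
  rw [← Subtype.coe_le_coe, ← Subtype.coe_lt_coe]
  exact (Order.lt_succ_iff).symm

lemma Iic_eq (a : X) : Iic a = Iio (sX a) := by
  ext x; simpa using le_iff_lt_sX

lemma Ioi_eq (a : X) : Ioi a = Ici (sX a) := by
  ext x
  simp only [mem_Ioi, mem_Ici, ← Subtype.coe_lt_coe, ← Subtype.coe_le_coe]
  exact (Order.succ_le_iff).symm

lemma isClopen_Iic (a : X) : IsClopen (Iic a) :=
  ⟨isClosed_Iic, Iic_eq a ▸ isOpen_Iio⟩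

lemma isClopen_Ioi (a : X) : IsClopen (Ioi a) :=
  ⟨Ioi_eq a ▸ isClosed_Ici, isOpen_Ioi⟩

lemma isClopen_Ioc (a b : X) : IsClopen (Ioc a b) := by
  rw [← Ioi_inter_Iic]; exact (isClopen_Ioi a).inter (isClopen_Iic b)

/-- Separation of disjoint closed subsets of an initial segment, by a clopen set
inside the initial segment. -/
lemma sep (o : Ordinal) : ∀ (ho : o < (aleph 1).ord) (R S : Set X), IsClosed R → IsClosed S →
    Disjoint R S → R ⊆ Iic ⟨o, ho⟩ → S ⊆ Iic ⟨o, ho⟩ →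
    ∃ C : Set X, IsClopen C ∧ R ⊆ C ∧ C ⊆ Iic ⟨o, ho⟩ ∧ Disjoint C S := by
  induction o using Ordinal.induction with
  | h o IH =>
  intro ho R S hR hS hRS hRsub hSsub
  set δ : X := ⟨o, ho⟩ with hδ
  have key : ∀ R S : Set X, IsClosed R → IsClosed S → Disjoint R S →
      R ⊆ Iic δ → S ⊆ Iic δ → δ ∉ S →
      ∃ C : Set X, IsClopen C ∧ R ⊆ C ∧ C ⊆ Iic δ ∧ Disjoint C S := by
    clear hR hS hRS hRsub hSsub R S
    intro R S hR hS hRS hRsub hSsub hδS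
    by_cases h0 : ∀ x : X, δ ≤ x
    · refine ⟨Iic δ, isClopen_Iic δ, hRsub, le_refl _, ?_⟩
      have hSe : S = ∅ := eq_empty_iff_forall_notMem.mpr fun x hx =>
        hδS (by rwa [le_antisymm (hSsub hx) (h0 x)] at hx)
      simp [hSe]
    · push_neg at h0
      obtain ⟨q, hq⟩ := h0
      obtain ⟨p, hpδ, hp⟩ :=
        exists_Ioc_subset_of_mem_nhds (hS.isOpen_compl.mem_nhds hδS) ⟨q, hq⟩
      have hSp : S ⊆ Iic p := fun x hx => by
        by_contra h
        rw [mem_Iic, not_le] at h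
        exact hp ⟨h, hSsub hx⟩ hx
      by_cases hδR : δ ∈ R
      · obtain ⟨C', hC', hRC', hC'sub, hC'S⟩ :=
          IH p.1 hpδ p.2 (R ∩ Iic p) S (hR.inter isClosed_Iic) hS
            (hRS.mono_left inter_subset_left) inter_subset_right hSp
        refine ⟨C' ∪ Ioc p δ, hC'.union (isClopen_Ioc p δ), ?_, ?_, ?_⟩
        · intro x hx
          rcases le_or_gt x p with h | h
          · exact Or.inl (hRC' ⟨hx, h⟩)
          · exact Or.inr ⟨h, hRsub hx⟩
        · exact union_subset (hC'sub.trans (Iic_subset_Iic.mpr hpδ.le)) fun x hx => hx.2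
        · refine disjoint_union_left.mpr ⟨hC'S, disjoint_left.mpr fun x hx hxS => ?_⟩
          exact hp hx hxS
      · obtain ⟨p', hp'δ, hp'⟩ :=
          exists_Ioc_subset_of_mem_nhds (hR.isOpen_compl.mem_nhds hδR) ⟨q, hq⟩
        have hRp : R ⊆ Iic p' := fun x hx => by
          by_contra h
          rw [mem_Iic, not_le] at h
          exact hp' ⟨h, hRsub hx⟩ hx
        have hm : max p p' < δ := max_lt hpδ hp'δ
        obtain ⟨C', hC', hRC', hC'sub, hC'S⟩ :=
          IH (max p p').1 hm (max p p').2 R S hR hS hRS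
            (hRp.trans (Iic_subset_Iic.mpr (le_max_right p p')))
            (hSp.trans (Iic_subset_Iic.mpr (le_max_left p p')))
        exact ⟨C', hC', hRC', hC'sub.trans (Iic_subset_Iic.mpr hm.le), hC'S⟩
  by_cases hδS : δ ∈ S
  · have hδR : δ ∉ R := fun h => disjoint_left.mp hRS h hδS
    obtain ⟨D, hD, hSD, hDsub, hDR⟩ := key S R hS hR hRS.symm hSsub hRsub hδR
    refine ⟨Iic δ \ D, (isClopen_Iic δ).diff hD, ?_, diff_subset, ?_⟩
    · exact fun x hx => ⟨hRsub hx, fun hxD => disjoint_left.mp hDR hxD hx⟩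
    · exact disjoint_left.mpr fun x hx hxS => hx.2 (hSD hxS)
  · exact key R S hR hS hRS hRsub hSsub hδS

theorem ultranormal : Ultranormal X := by
  intro R S hR hS hRS
  by_cases hSb : ∃ δ : X, S ⊆ Iic δ
  · obtain ⟨δ, hSδ⟩ := hSb
    obtain ⟨C', hC', hRC', hC'sub, hC'S⟩ :=
      sep δ.1 δ.2 (R ∩ Iic δ) S (hR.inter isClosed_Iic) hS
        (hRS.mono_left inter_subset_left) inter_subset_right hSδ
    refine ⟨C' ∪ Ioi δ, hC'.union (isClopen_Ioi δ), ?_, ?_⟩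
    · intro x hx
      rcases le_or_gt x δ with h | h
      · exact Or.inl (hRC' ⟨hx, h⟩)
      · exact Or.inr h
    · apply eq_empty_iff_forall_notMem.mpr
      rintro x ⟨hxS, hxC | hxI⟩
      · exact disjoint_left.mp hC'S hxC hxS
      · exact absurd (hSδ hxS) (show ¬ x ≤ δ from not_le.mpr hxI)
  · by_cases hRb : ∃ δ : X, R ⊆ Iic δ
    · obtain ⟨δ, hRδ⟩ := hRb
      obtain ⟨C', hC', hRC', hC'sub, hC'S⟩ :=
        sep δ.1 δ.2 R (S ∩ Iic δ) hR (hS.inter isClosed_Iic)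
          (hRS.mono_right inter_subset_left) hRδ inter_subset_right
      refine ⟨C', hC', hRC', eq_empty_iff_forall_notMem.mpr ?_⟩
      rintro x ⟨hxS, hxC⟩
      exact disjoint_left.mp hC'S hxC ⟨hxS, hC'sub hxC⟩
    · exfalso
      have hRu : ∀ x : X, ∃ y, y ∈ R ∧ x < y := fun x => by
        obtain ⟨y, hy, hle⟩ := not_subset.mp fun h => hRb ⟨x, h⟩
        exact ⟨y, hy, not_le.mp hle⟩
      have hSu : ∀ x : X, ∃ y, y ∈ S ∧ x < y := fun x => by
        obtain ⟨y, hy, hle⟩ := not_subset.mp fun h => hSb ⟨x, h⟩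
        exact ⟨y, hy, not_le.mp hle⟩
      choose r hrR hrlt using hRu
      choose s hsS hslt using hSu
      have h0 : (0 : Ordinal) < (aleph 1).ord := (Cardinal.isSuccLimit_ord (aleph0_le_aleph 1)).pos
      let b : X := ⟨0, h0⟩
      let f : ℕ → X := fun n => Nat.rec (r b) (fun n x => if n % 2 = 0 then s x else r x) n
      have hfsucc : ∀ n, f (n + 1) = if n % 2 = 0 then s (f n) else r (f n) := fun n => rfl
      have hf_lt : ∀ n, f n < f (n + 1) := by
        intro n
        rw [hfsucc]
        by_cases h : n % 2 = 0 <;> simp [h, hslt, hrlt]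
      have hmono : StrictMono f := strictMono_nat_of_lt_succ hf_lt
      have hfmem : ∀ n, (n % 2 = 0 → f n ∈ R) ∧ (n % 2 = 1 → f n ∈ S) := by
        intro n
        induction n with
        | zero => exact ⟨fun _ => hrR b, fun h => by omega⟩
        | succ n _ =>
          by_cases h : n % 2 = 0
          · rw [hfsucc, if_pos h]
            exact ⟨fun h2 => by omega, fun _ => hsS _⟩
          · rw [hfsucc, if_neg h]
            exact ⟨fun _ => hrR _, fun h2 => by omega⟩
      let g : ℕ → Ordinal := fun n => (f n).1
      have hbd : iSup g < (aleph 1).ord := by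
        apply Cardinal.iSup_lt_ord_lift_of_isRegular isRegular_aleph_one
        · rw [Cardinal.mk_nat, Cardinal.lift_aleph0]; exact aleph0_lt_aleph_one
        · exact fun n => (f n).2
      let x : X := ⟨iSup g, hbd⟩
      have hle : ∀ n, f n ≤ x := fun n => by
        rw [← Subtype.coe_le_coe]
        exact le_ciSup (Ordinal.bddAbove_range g) n
      have hlt0 : f 0 < x := (hf_lt 0).trans_le (hle 1)
      have hx : ∀ A : Set X, IsClosed A → (∀ n, ∃ m, n ≤ m ∧ f m ∈ A) → x ∈ A := by
        intro A hA hAf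
        rw [← hA.closure_eq, mem_closure_iff]
        intro U hU hxU
        obtain ⟨l, hlx, hl⟩ := exists_Ioc_subset_of_mem_nhds (hU.mem_nhds hxU) ⟨f 0, hlt0⟩
        have hex : ∃ n, l.1 < g n := by
          by_contra h
          push_neg at h
          exact absurd (Subtype.coe_lt_coe.mpr hlx) (not_lt.mpr (ciSup_le h))
        obtain ⟨n, hn⟩ := hex
        obtain ⟨m, hnm, hmA⟩ := hAf n
        refine ⟨f m, hl ⟨?_, hle m⟩, hmA⟩
        rw [← Subtype.coe_lt_coe]
        exact hn.trans_le (Subtype.coe_le_coe.mpr (hmono.monotone hnm))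
      have hxR : x ∈ R := hx R hR fun n => ⟨2 * n, by omega, (hfmem (2 * n)).1 (by omega)⟩
      have hxS : x ∈ S := hx S hS fun n => ⟨2 * n + 1, by omega, (hfmem (2 * n + 1)).2 (by omega)⟩
      exact disjoint_left.mp hRS hxR hxS

end

end Omega1Aux

open Cardinal in
/-- The space `ω₁` of countable ordinals, with the order topology, is ultranormal. -/
theorem omega1_ultranormal :
    @Ultranormal {α : Ordinal // α < (aleph 1).ord}
      (Preorder.topology {α : Ordinal // α < (aleph 1).ord}) := by
  exact Omega1Aux.ultranormal
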